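/- Let A ⊆ ℝ^d have Gaussian measure γ_d(A) = 1/2 and let ℓ be a positive integer, θ = π/(2ℓ). Then RS_A(θ) ≥ θ/π, where RS_A(θ) = P[1_A(z) ≠ 1_A(z')] for (z,z') a cos θ-correlated d-dimensional Gaussian pair. -/

import Mathlib

open MeasureTheory ProbabilityTheory Real
open scoped ENNReal

/-- The standard Gaussian measure on `ℝ^d`. -/
noncomputable def stdGaussian (d : ℕ) : Measure (Fin d → ℝ) :=
  Measure.pi fun _ => gaussianReal 0 1

/-- Rotation sensitivity `RS_A(θ) = P[1_A(z) ≠ 1_A(z')]` where `(z, z')` is a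
`cos θ`-correlated `d`-dimensional Gaussian pair, realized as `z = g`,
`z' = cos θ ⬝ g + sin θ ⬝ g'` with `g, g'` independent standard `d`-dimensional Gaussians. -/
noncomputable def RS (d : ℕ) (A : Set (Fin d → ℝ)) (θ : ℝ) : ENNReal :=
  ((stdGaussian d).prod (stdGaussian d))
    {p | (p.1 ∈ A) ≠ ((fun i => Real.cos θ * p.1 i + Real.sin θ * p.2 i) ∈ A)}

/-! ### Auxiliary lemmas -/

/-- The 2-dimensional standard Gaussian measure. -/
noncomputable def stdG2 : Measure (ℝ × ℝ) := (gaussianReal 0 1).prod (gaussianReal 0 1)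

instance : IsProbabilityMeasure stdG2 := by unfold stdG2; infer_instance

lemma stdG2_eq : stdG2 = (volume : Measure (ℝ × ℝ)).withDensity
    (fun p => gaussianPDF 0 1 p.1 * gaussianPDF 0 1 p.2) := by
  rw [Measure.volume_eq_prod]
  refine Measure.prod_eq fun s t hs ht => ?_
  rw [withDensity_apply _ (hs.prod ht), ← Measure.prod_restrict,
    lintegral_prod_mul (measurable_gaussianPDF 0 1).aemeasurable
      (measurable_gaussianPDF 0 1).aemeasurable,
    gaussianReal_apply 0 one_ne_zero s, gaussianReal_apply 0 one_ne_zero t]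

lemma pdf_rot {c s : ℝ} (h : c ^ 2 + s ^ 2 = 1) (x y : ℝ) :
    gaussianPDF 0 1 (c * x + s * y) * gaussianPDF 0 1 (-s * x + c * y) =
    gaussianPDF 0 1 x * gaussianPDF 0 1 y := by
  simp only [gaussianPDF, ← ENNReal.ofReal_mul (gaussianPDFReal_nonneg _ _ _)]
  congr 1
  simp only [gaussianPDFReal]
  rw [mul_mul_mul_comm, ← Real.exp_add, mul_mul_mul_comm, ← Real.exp_add]
  congr 2
  push_cast
  field_simp
  nlinarith [h]

lemma map_withDensity_comp {α : Type*} [MeasurableSpace α] {μ : Measure α} {f : α → α}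
    (hf : MeasurePreserving f μ μ) {g : α → ENNReal} (hg : Measurable g) :
    Measure.map f (μ.withDensity (g ∘ f)) = μ.withDensity g := by
  ext S hS
  rw [Measure.map_apply hf.measurable hS, withDensity_apply _ (hf.measurable hS),
    withDensity_apply _ hS]
  calc ∫⁻ x in f ⁻¹' S, (g ∘ f) x ∂μ = ∫⁻ y in S, g y ∂(Measure.map f μ) := by
        rw [setLIntegral_map hS hg hf.measurable]; rfl
    _ = ∫⁻ y in S, g y ∂μ := by rw [hf.map_eq]

/-- The rotation by `(c, s)` as a linear map on `ℝ × ℝ`. -/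
noncomputable def rotLM (c s : ℝ) : (ℝ × ℝ) →ₗ[ℝ] (ℝ × ℝ) :=
  LinearMap.prod (c • LinearMap.fst ℝ ℝ ℝ + s • LinearMap.snd ℝ ℝ ℝ)
                 ((-s) • LinearMap.fst ℝ ℝ ℝ + c • LinearMap.snd ℝ ℝ ℝ)

lemma rotLM_apply (c s : ℝ) (p : ℝ × ℝ) :
    rotLM c s p = (c * p.1 + s * p.2, -s * p.1 + c * p.2) := by
  simp [rotLM, smul_eq_mul]

lemma rot_vol (c s : ℝ) (h : c ^ 2 + s ^ 2 = 1) :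
    MeasurePreserving (rotLM c s) (volume : Measure (ℝ × ℝ)) volume := by
  have hdet : LinearMap.det (rotLM c s) = c ^ 2 + s ^ 2 := by
    rw [← LinearMap.det_toMatrix (Module.Basis.finTwoProd ℝ), Matrix.det_fin_two]
    simp [LinearMap.toMatrix_apply, rotLM]
    ring
  refine ⟨(rotLM c s).continuous_of_finiteDimensional.measurable, ?_⟩
  rw [Measure.map_linearMap_addHaar_eq_smul_addHaar _ (by rw [hdet, h]; norm_num), hdet, h]
  simp

lemma rot_gauss2 {c s : ℝ} (h : c ^ 2 + s ^ 2 = 1) :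
    MeasurePreserving (fun p : ℝ × ℝ => (c * p.1 + s * p.2, -s * p.1 + c * p.2))
      stdG2 stdG2 := by
  have hfun : (fun p : ℝ × ℝ => (c * p.1 + s * p.2, -s * p.1 + c * p.2)) = rotLM c s := by
    funext p; rw [rotLM_apply]
  rw [hfun]
  have hmg : Measurable (fun p : ℝ × ℝ => gaussianPDF 0 1 p.1 * gaussianPDF 0 1 p.2) :=
    ((measurable_gaussianPDF 0 1).comp measurable_fst).mul
      ((measurable_gaussianPDF 0 1).comp measurable_snd)
  refine ⟨(rotLM c s).continuous_of_finiteDimensional.measurable, ?_⟩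
  have hcomp : (fun p : ℝ × ℝ => gaussianPDF 0 1 p.1 * gaussianPDF 0 1 p.2) ∘ (rotLM c s)
      = fun p : ℝ × ℝ => gaussianPDF 0 1 p.1 * gaussianPDF 0 1 p.2 := by
    funext p
    simp only [Function.comp_apply, rotLM_apply]
    exact pdf_rot h p.1 p.2
  conv_lhs => rw [stdG2_eq, ← hcomp]
  rw [map_withDensity_comp (rot_vol c s h) hmg, ← stdG2_eq]

instance stdGaussian_prob (d : ℕ) : IsProbabilityMeasure (stdGaussian d) := by
  unfold _root_.stdGaussian; infer_instance

/-- Coordinatewise rotation on `ℝ^d × ℝ^d`. -/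
noncomputable def rotD (d : ℕ) (c s : ℝ) (p : (Fin d → ℝ) × (Fin d → ℝ)) :
    (Fin d → ℝ) × (Fin d → ℝ) :=
  (fun i => c * p.1 i + s * p.2 i, fun i => -s * p.1 i + c * p.2 i)

lemma rot_gaussD (d : ℕ) {c s : ℝ} (h : c ^ 2 + s ^ 2 = 1) :
    MeasurePreserving (rotD d c s) ((stdGaussian d).prod (stdGaussian d))
      ((stdGaussian d).prod (stdGaussian d)) := by
  have he : MeasurePreserving (MeasurableEquiv.arrowProdEquivProdArrow ℝ ℝ (Fin d))
      (Measure.pi fun _ => stdG2) ((stdGaussian d).prod (stdGaussian d)) :=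
    measurePreserving_arrowProdEquivProdArrow ℝ ℝ (Fin d) (fun _ => gaussianReal 0 1)
      (fun _ => gaussianReal 0 1)
  have hpi : MeasurePreserving
      (fun (a : Fin d → ℝ × ℝ) i => (c * (a i).1 + s * (a i).2, -s * (a i).1 + c * (a i).2))
      (Measure.pi fun _ => stdG2) (Measure.pi fun _ => stdG2) :=
    measurePreserving_pi _ _ (fun _ => rot_gauss2 h)
  have hcomp := (he.comp hpi).comp he.symm
  have hfun : ((MeasurableEquiv.arrowProdEquivProdArrow ℝ ℝ (Fin d)) ∘
      (fun (a : Fin d → ℝ × ℝ) i => (c * (a i).1 + s * (a i).2, -s * (a i).1 + c * (a i).2))) ∘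
      (MeasurableEquiv.arrowProdEquivProdArrow ℝ ℝ (Fin d)).symm = rotD d c s := by
    funext p
    rfl
  rwa [hfun] at hcomp

theorem rotation_sensitivity_lower_bound (d : ℕ) (A : Set (Fin d → ℝ))
    (hA : MeasurableSet A) (hvol : stdGaussian d A = 1 / 2)
    (ℓ : ℕ) (hℓ : 0 < ℓ) (θ : ℝ) (hθ : θ = π / (2 * ℓ)) :
    ENNReal.ofReal (θ / π) ≤ RS d A θ := by
  set μ := (stdGaussian d).prod (stdGaussian d) with hμ
  -- the interpolating points
  set Z : ℕ → ((Fin d → ℝ) × (Fin d → ℝ)) → (Fin d → ℝ) :=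
    fun j p i => Real.cos (j * θ) * p.1 i + Real.sin (j * θ) * p.2 i with hZdef
  set S : Set ((Fin d → ℝ) × (Fin d → ℝ)) :=
    {p | (p.1 ∈ A) ≠ ((fun i => Real.cos θ * p.1 i + Real.sin θ * p.2 i) ∈ A)} with hSdef
  have hℓR : (ℓ : ℝ) ≠ 0 := Nat.cast_ne_zero.mpr hℓ.ne'
  -- measurability of S
  have hg : Measurable (fun p : (Fin d → ℝ) × (Fin d → ℝ) =>
      (fun i => Real.cos θ * p.1 i + Real.sin θ * p.2 i)) :=
    measurable_pi_lambda _ fun i =>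
      (((measurable_pi_apply i).comp measurable_fst).const_mul _).add
        (((measurable_pi_apply i).comp measurable_snd).const_mul _)
  have hSm : MeasurableSet S := by
    have : S = ((Prod.fst ⁻¹' A) \ ((fun p : (Fin d → ℝ) × (Fin d → ℝ) =>
        (fun i => Real.cos θ * p.1 i + Real.sin θ * p.2 i)) ⁻¹' A)) ∪
        (((fun p : (Fin d → ℝ) × (Fin d → ℝ) =>
        (fun i => Real.cos θ * p.1 i + Real.sin θ * p.2 i)) ⁻¹' A) \ (Prod.fst ⁻¹' A)) := by
      ext p
      simp only [hSdef, Set.mem_setOf_eq, ne_eq, eq_iff_iff, Set.mem_union, Set.mem_diff,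
        Set.mem_preimage]
      tauto
    rw [this]
    exact ((measurable_fst hA).diff (hg hA)).union ((hg hA).diff (measurable_fst hA))
  -- each step has measure RS d A θ
  have hstep : ∀ j : ℕ, μ {p | (Z j p ∈ A) ≠ (Z (j + 1) p ∈ A)} = RS d A θ := by
    intro j
    have htrig : Real.cos (j * θ) ^ 2 + Real.sin (j * θ) ^ 2 = 1 := by
      rw [add_comm]; exact Real.sin_sq_add_cos_sq _
    have hmp := rot_gaussD d htrig
    have hset : {p | (Z j p ∈ A) ≠ (Z (j + 1) p ∈ A)} =
        rotD d (Real.cos (j * θ)) (Real.sin (j * θ)) ⁻¹' S := by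
      ext p
      have h1 : (rotD d (Real.cos (j * θ)) (Real.sin (j * θ)) p).1 = Z j p := rfl
      have h2 : (fun i => Real.cos θ * (rotD d (Real.cos (j * θ)) (Real.sin (j * θ)) p).1 i +
          Real.sin θ * (rotD d (Real.cos (j * θ)) (Real.sin (j * θ)) p).2 i) = Z (j + 1) p := by
        funext i
        show Real.cos θ * (Real.cos (j * θ) * p.1 i + Real.sin (j * θ) * p.2 i) +
          Real.sin θ * (-Real.sin (j * θ) * p.1 i + Real.cos (j * θ) * p.2 i) =
          Real.cos (((j : ℕ) + 1 : ℕ) * θ) * p.1 i + Real.sin (((j : ℕ) + 1 : ℕ) * θ) * p.2 i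
        have : (((j : ℕ) + 1 : ℕ) : ℝ) * θ = j * θ + θ := by push_cast; ring
        rw [this, Real.cos_add, Real.sin_add]
        ring
      simp only [Set.mem_preimage, hSdef, Set.mem_setOf_eq]
      rw [h2, h1]
    rw [hset, hmp.measure_preimage hSm.nullMeasurableSet]
    rfl
  -- the union bound
  set B : Set ((Fin d → ℝ) × (Fin d → ℝ)) := {p | (p.1 ∈ A) ≠ (p.2 ∈ A)} with hBdef
  have hZ0 : ∀ p : (Fin d → ℝ) × (Fin d → ℝ), Z 0 p = p.1 := by
    intro p; funext i; simp [hZdef]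
  have hZl : ∀ p : (Fin d → ℝ) × (Fin d → ℝ), Z ℓ p = p.2 := by
    intro p; funext i
    have : (ℓ : ℝ) * θ = π / 2 := by rw [hθ]; field_simp
    simp [hZdef, this]
  have hsub : B ⊆ ⋃ j ∈ Finset.range ℓ, {p | (Z j p ∈ A) ≠ (Z (j + 1) p ∈ A)} := by
    intro p hp
    by_contra hcon
    have hall : ∀ k, k < ℓ → ¬ ((Z k p ∈ A) ≠ (Z (k + 1) p ∈ A)) := by
      intro k hk hne
      exact hcon (Set.mem_biUnion (Finset.mem_range.mpr hk) hne)
    have key : ∀ j ≤ ℓ, (Z j p ∈ A) = (p.1 ∈ A) := by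
      intro j hj
      induction j with
      | zero => rw [hZ0 p]
      | succ k ih =>
        have hk : k < ℓ := Nat.lt_of_succ_le hj
        have heq : (Z k p ∈ A) = (Z (k + 1) p ∈ A) := not_ne_iff.mp (hall k hk)
        rw [← heq, ih hk.le]
    have := key ℓ le_rfl
    rw [hZl p] at this
    exact hp this.symm
  -- μ B = 1/2
  have hAc : stdGaussian d Aᶜ = 1 / 2 := by
    rw [measure_compl hA (measure_ne_top _ _), measure_univ, hvol]
    rw [one_div, ENNReal.one_sub_inv_two]
  have hBm : μ B = 1 / 2 := by
    have hBeq : B = (A ×ˢ Aᶜ) ∪ (Aᶜ ×ˢ A) := by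
      ext p
      simp only [hBdef, Set.mem_setOf_eq, ne_eq, eq_iff_iff, Set.mem_union, Set.mem_prod,
        Set.mem_compl_iff]
      tauto
    have hdisj : Disjoint (A ×ˢ Aᶜ) (Aᶜ ×ˢ (A : Set (Fin d → ℝ))) := by
      rw [Set.disjoint_left]
      rintro ⟨x, y⟩ ⟨hx, -⟩ ⟨hx', -⟩
      exact hx' hx
    rw [hBeq, measure_union hdisj (hA.compl.prod hA), hμ, Measure.prod_prod,
      Measure.prod_prod, hvol, hAc]
    rw [← two_mul, one_div, ← mul_assoc, ENNReal.mul_inv_cancel two_ne_zero ENNReal.ofNat_ne_top,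
      one_mul]
  -- putting it together
  have hbound : (1 : ℝ≥0∞) / 2 ≤ (ℓ : ℝ≥0∞) * RS d A θ := by
    calc (1 : ℝ≥0∞) / 2 = μ B := hBm.symm
      _ ≤ μ (⋃ j ∈ Finset.range ℓ, {p | (Z j p ∈ A) ≠ (Z (j + 1) p ∈ A)}) :=
          measure_mono hsub
      _ ≤ ∑ j ∈ Finset.range ℓ, μ {p | (Z j p ∈ A) ≠ (Z (j + 1) p ∈ A)} :=
          measure_biUnion_finset_le _ _
      _ = ∑ _j ∈ Finset.range ℓ, RS d A θ := by
          exact Finset.sum_congr rfl fun j _ => hstep j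
      _ = (ℓ : ℝ≥0∞) * RS d A θ := by
          rw [Finset.sum_const, Finset.card_range, nsmul_eq_mul]
  have hθπ : θ / π = 1 / (2 * ℓ) := by
    rw [hθ]
    have hπ : (π : ℝ) ≠ 0 := Real.pi_ne_zero
    field_simp
  rw [hθπ]
  have hofReal : ENNReal.ofReal (1 / (2 * (ℓ:ℝ))) = 1 / (2 * (ℓ:ℝ≥0∞)) := by
    rw [one_div, ENNReal.ofReal_inv_of_pos (by positivity), one_div]
    congr 1
    rw [ENNReal.ofReal_mul (by norm_num)]
    simp [ENNReal.ofReal_natCast]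
  rw [hofReal]
  have hℓ0 : (ℓ : ℝ≥0∞) ≠ 0 := Nat.cast_ne_zero.mpr hℓ.ne'
  have hℓtop : (ℓ : ℝ≥0∞) ≠ ⊤ := ENNReal.natCast_ne_top ℓ
  have h2 : (ℓ : ℝ≥0∞)⁻¹ * (1 / 2) ≤ (ℓ : ℝ≥0∞)⁻¹ * ((ℓ : ℝ≥0∞) * RS d A θ) :=
    mul_le_mul_right hbound _
  rw [← mul_assoc, ENNReal.inv_mul_cancel hℓ0 hℓtop, one_mul] at h2
  refine le_trans (le_of_eq ?_) h2
  rw [one_div, one_div, ENNReal.mul_inv (Or.inl two_ne_zero) (Or.inl ENNReal.ofNat_ne_top)]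
  exact mul_comm _ _
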